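/- arXiv:2110.15902 — 2 statements merged into one kernel-verified Lean document; each statement's English description precedes it below -/
import Mathlib

section
/- A group H is generically embeddable if and only if H is countable and every finitely generated subgroup of H is generically embeddable. -/
/-- The set of group multiplication tables on `ℕ` with identity `0`. -/
def GroupTables : Set (ℕ × ℕ → ℕ) :=
  {m | (∀ a b c : ℕ, m (m (a, b), c) = m (a, m (b, c))) ∧
       (∀ a : ℕ, m (a, 0) = a) ∧
       (∀ a : ℕ, m (0, a) = a) ∧
       (∀ a : ℕ, ∃ b : ℕ, m (a, b) = 0 ∧ m (b, a) = 0)}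

/-- The carrier of the group `Ḡ` associated to a table `G ∈ 𝒢` (a copy of `ℕ`). -/
def Carrier (_G : ↥GroupTables) : Type := ℕ

noncomputable instance instGroupCarrier (G : ↥GroupTables) : Group (Carrier G) where
  mul a b := G.1 (a, b)
  one := (0 : ℕ)
  inv a := Classical.choose (G.2.2.2.2 a)
  mul_assoc a b c := G.2.1 a b c
  one_mul a := G.2.2.2.1 a
  mul_one a := G.2.2.1 a
  inv_mul_cancel a := (Classical.choose_spec (G.2.2.2.2 a)).2

/-- Inclusion of `ℕ` into the carrier of `Ḡ`. -/
def toC (G : ↥GroupTables) (n : ℕ) : Carrier G := n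

/-- Projection of the carrier of `Ḡ` back to `ℕ`. -/
def fromC (G : ↥GroupTables) (x : Carrier G) : ℕ := x

/-- A group `H` is generically embeddable if
`E_H = {G ∈ 𝒢 : H embeds into Ḡ}` is comeager in `𝒢`. -/
def GenericallyEmbeddable (H : Type*) [Group H] : Prop :=
  {G : ↥GroupTables | ∃ f : H →* Carrier G, Function.Injective f} ∈ residual ↥GroupTables

namespace GenEmb
open Topology Filter Function Set

lemma toC_mul (G : ↥GroupTables) (a b : ℕ) :
    toC G a * toC G b = toC G (G.1 (a, b)) := rfl

lemma toC_zero (G : ↥GroupTables) : toC G 0 = 1 := rfl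

lemma toC_injective (G : ↥GroupTables) : Function.Injective (toC G) := fun _ _ h => h

lemma toC_fromC (G : ↥GroupTables) (x : Carrier G) : toC G (fromC G x) = x := rfl

/-- Cylinder sets in the space of tables. -/
def Cyl (s : Finset (ℕ × ℕ)) (v : ℕ × ℕ → ℕ) : Set ↥GroupTables :=
  {G | ∀ z ∈ s, G.1 z = v z}

lemma isOpen_cyl (s : Finset (ℕ × ℕ)) (v : ℕ × ℕ → ℕ) : IsOpen (Cyl s v) := by
  have : Cyl s v = ⋂ z ∈ s, {G : ↥GroupTables | G.1 z = v z} := by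
    ext G; simp [Cyl]
  rw [this]
  refine isOpen_biInter_finset fun z _ => ?_
  have : {G : ↥GroupTables | G.1 z = v z}
      = (fun G : ↥GroupTables => G.1 z) ⁻¹' {v z} := rfl
  rw [this]
  exact (((continuous_apply z).comp continuous_subtype_val)).isOpen_preimage _ (isOpen_discrete _)

lemma exists_cyl_subset {U : Set ↥GroupTables} (hU : IsOpen U) {G : ↥GroupTables}
    (hG : G ∈ U) : ∃ s : Finset (ℕ × ℕ), Cyl s G.1 ⊆ U := by
  obtain ⟨V, hV, rfl⟩ := isOpen_induced_iff.mp hU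
  have hV' : V ∈ 𝓝 G.1 := hV.mem_nhds hG
  rw [nhds_pi] at hV'
  obtain ⟨I, hIfin, t, ht, hsub⟩ := Filter.mem_pi.mp hV'
  refine ⟨hIfin.toFinset, fun G'' hG'' => ?_⟩
  refine hsub fun z hz => ?_
  have h1 : G''.1 z = G.1 z := hG'' z (hIfin.mem_toFinset.mpr hz)
  have h2 : t z ∈ 𝓝 (G.1 z) := ht z
  rw [nhds_discrete] at h2
  rw [h1]
  exact h2

-- continuation fragment, appended to p1 content for testing
lemma mem_residual_of_cyl {C : Set ↥GroupTables}
    (h : ∀ (G : ↥GroupTables) (s : Finset (ℕ × ℕ)),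
      ∃ G' : ↥GroupTables, (∀ z ∈ s, G'.1 z = G.1 z) ∧
        ∃ s' : Finset (ℕ × ℕ), Cyl s' G'.1 ⊆ C) :
    C ∈ residual ↥GroupTables := by
  set O : Set ↥GroupTables :=
    ⋃ (p : Finset (ℕ × ℕ) × (ℕ × ℕ → ℕ)) (_ : Cyl p.1 p.2 ⊆ C), Cyl p.1 p.2 with hO
  have hOopen : IsOpen O := isOpen_iUnion fun p => isOpen_iUnion fun _ => isOpen_cyl _ _
  have hOC : O ⊆ C := iUnion_subset fun p => iUnion_subset fun hp => hp
  have hOdense : Dense O := by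
    rw [dense_iff_inter_open]
    rintro U hU ⟨G, hG⟩
    obtain ⟨s, hs⟩ := exists_cyl_subset hU hG
    obtain ⟨G', hag, s', hsub⟩ := h G s
    refine ⟨G', hs (fun z hz => hag z hz), ?_⟩
    rw [hO]
    exact mem_iUnion.mpr ⟨(s', G'.1), mem_iUnion.mpr ⟨hsub, fun z _ => rfl⟩⟩
  exact Filter.mem_of_superset (residual_of_dense_open hOopen hOdense) hOC

/-- A group structure on `M` transported along an equivalence gives a table. -/
lemma table_of_equiv {M : Type*} [Group M] (e : ℕ ≃ M) (h0 : e 0 = 1) :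
    (fun z : ℕ × ℕ => e.symm (e z.1 * e z.2)) ∈ GroupTables := by
  refine ⟨fun a b c => ?_, fun a => ?_, fun a => ?_, fun a => ?_⟩
  · simp [mul_assoc]
  · show e.symm (e a * e 0) = a
    rw [h0]; simp
  · show e.symm (e 0 * e a) = a
    rw [h0]; simp
  · refine ⟨e.symm (e a)⁻¹, ?_, ?_⟩
    · show e.symm (e a * e (e.symm (e a)⁻¹)) = 0
      rw [Equiv.apply_symm_apply, mul_inv_cancel, ← h0, Equiv.symm_apply_apply]
    · show e.symm (e (e.symm (e a)⁻¹) * e a) = 0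
      rw [Equiv.apply_symm_apply, inv_mul_cancel, ← h0, Equiv.symm_apply_apply]

lemma exists_equiv_extend {M : Type*} [Group M] [Countable M] {j : ℕ → M}
    (hj : Function.Injective j) (hj0 : j 0 = 1) (F : Finset ℕ) :
    ∃ e : ℕ ≃ M, e 0 = 1 ∧ ∀ k ∈ F, e k = j k := by
  classical
  haveI : Infinite M := Infinite.of_injective j hj
  set F' : Finset ℕ := insert 0 F with hF'
  set S : Set ℕ := ↑F' with hS
  have hSfin : S.Finite := F'.finite_toSet
  have hIfin : (j '' S).Finite := hSfin.image j
  haveI : Infinite ↥(Sᶜ) := hSfin.infinite_compl.to_subtype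
  haveI : Infinite ↥((j '' S)ᶜ) := hIfin.infinite_compl.to_subtype
  obtain ⟨ec⟩ : Nonempty (↥(Sᶜ) ≃ ↥((j '' S)ᶜ)) := nonempty_equiv_of_countable
  set e : ℕ ≃ M :=
    (Equiv.Set.sumCompl S).symm.trans
      (((Equiv.Set.image j S hj).sumCongr ec).trans (Equiv.Set.sumCompl (j '' S))) with he
  have key : ∀ k ∈ F', e k = j k := by
    intro k hk
    have hkS : k ∈ S := by exact_mod_cast hk
    rw [he]
    simp only [Equiv.trans_apply]
    rw [Equiv.Set.sumCompl_symm_apply_of_mem hkS]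
    rfl
  refine ⟨e, ?_, fun k hk => key k (Finset.mem_insert_of_mem hk)⟩
  rw [key 0 (Finset.mem_insert_self _ _), hj0]

/-! ### The space of tables is Polish -/

/-- The inverse function of a table. -/
noncomputable def invF (G : ↥GroupTables) (a : ℕ) : ℕ := fromC G (toC G a)⁻¹

lemma invF_eq {G : ↥GroupTables} {a b : ℕ} (h : G.1 (a, b) = 0) : invF G a = b := by
  have : toC G a * toC G b = 1 := by rw [toC_mul, h, toC_zero]
  have h2 : (toC G a)⁻¹ = toC G b := inv_eq_of_mul_eq_one_right this
  show fromC G (toC G a)⁻¹ = b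
  rw [h2]; rfl

lemma table_invF (G : ↥GroupTables) (a : ℕ) :
    G.1 (a, invF G a) = 0 ∧ G.1 (invF G a, a) = 0 := by
  constructor
  · have : toC G (G.1 (a, invF G a)) = toC G 0 := by
      rw [← toC_mul, toC_zero]
      show toC G a * (toC G a)⁻¹ = 1
      simp
    exact toC_injective G this
  · have : toC G (G.1 (invF G a, a)) = toC G 0 := by
      rw [← toC_mul, toC_zero]
      show (toC G a)⁻¹ * toC G a = 1
      simp
    exact toC_injective G this

/-- The embedding of the space of tables into a Polish space, remembering inverses. -/
noncomputable def Phi (G : ↥GroupTables) : (ℕ × ℕ → ℕ) × (ℕ → ℕ) := (G.1, invF G)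

lemma continuous_invF_apply (a : ℕ) : Continuous fun G : ↥GroupTables => invF G a := by
  rw [continuous_iff_continuousAt]
  intro G
  rw [ContinuousAt]
  intro U hU
  rw [Filter.mem_map]
  have hmem : invF G a ∈ U := mem_of_mem_nhds hU
  have hopen : IsOpen (Cyl {(a, invF G a)} G.1) := isOpen_cyl _ _
  refine Filter.mem_of_superset (hopen.mem_nhds ?_) ?_
  · intro z hz; rfl
  · intro G' hG'
    have : G'.1 (a, invF G a) = 0 := by
      rw [hG' (a, invF G a) (Finset.mem_singleton_self _)]
      exact (table_invF G a).1
    show invF G' a ∈ U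
    rw [invF_eq this]
    exact hmem

lemma isClosedEmbedding_Phi : Topology.IsClosedEmbedding Phi := by
  have hcont : Continuous Phi :=
    continuous_subtype_val.prodMk (continuous_pi continuous_invF_apply)
  have hinj : Function.Injective Phi := by
    intro G G' h
    exact Subtype.ext (congrArg Prod.fst h)
  have hind : Topology.IsInducing Phi := by
    refine Topology.IsInducing.of_comp hcont continuous_fst ?_
    exact Topology.IsInducing.subtypeVal
  refine ⟨⟨hind, hinj⟩, ?_⟩
  have : Set.range Phi =
      {p : (ℕ × ℕ → ℕ) × (ℕ → ℕ) |
        (∀ a b c : ℕ, p.1 (p.1 (a, b), c) = p.1 (a, p.1 (b, c))) ∧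
        (∀ a : ℕ, p.1 (a, 0) = a) ∧ (∀ a : ℕ, p.1 (0, a) = a) ∧
        (∀ a : ℕ, p.1 (a, p.2 a) = 0 ∧ p.1 (p.2 a, a) = 0)} := by
    ext p
    constructor
    · rintro ⟨G, rfl⟩
      exact ⟨G.2.1, G.2.2.1, G.2.2.2.1, fun a => table_invF G a⟩
    · rintro ⟨h1, h2, h3, h4⟩
      have hmem : p.1 ∈ GroupTables :=
        ⟨h1, h2, h3, fun a => ⟨p.2 a, h4 a⟩⟩
      refine ⟨⟨p.1, hmem⟩, ?_⟩
      have : invF ⟨p.1, hmem⟩ = p.2 := by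
        funext a
        exact invF_eq (h4 a).1
      rw [Phi, this]
  rw [this]
  -- closedness
  have cont_eval : Continuous fun q : (ℕ × ℕ → ℕ) × (ℕ × ℕ) => q.1 q.2 := by
    rw [continuous_iff_continuousAt]
    rintro ⟨f, x⟩
    rw [ContinuousAt, nhds_prod_eq]
    intro U hU
    rw [Filter.mem_map]
    have hmem : f x ∈ U := mem_of_mem_nhds hU
    have h1 : {g : ℕ × ℕ → ℕ | g x = f x} ∈ 𝓝 f := by
      refine IsOpen.mem_nhds ?_ rfl
      exact (continuous_apply x : Continuous fun g : ℕ × ℕ → ℕ => g x).isOpen_preimage ({f x} : Set ℕ) (isOpen_discrete _)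
    have h2 : ({x} : Set (ℕ × ℕ)) ∈ 𝓝 x := by rw [nhds_discrete]; rfl
    refine Filter.mem_of_superset (Filter.prod_mem_prod h1 h2) ?_
    rintro ⟨g, y⟩ ⟨hg, hy⟩
    have hy' : y = x := hy
    have hg' : g x = f x := hg
    show g y ∈ U
    rw [hy', hg']
    exact hmem
  have cfst : Continuous fun p : (ℕ × ℕ → ℕ) × (ℕ → ℕ) => p.1 := continuous_fst
  have csnd : Continuous fun p : (ℕ × ℕ → ℕ) × (ℕ → ℕ) => p.2 := continuous_snd
  have ceval1 : ∀ z : ℕ × ℕ, Continuous fun p : (ℕ × ℕ → ℕ) × (ℕ → ℕ) => p.1 z :=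
    fun z => (continuous_apply z).comp cfst
  have ceval2 : ∀ a : ℕ, Continuous fun p : (ℕ × ℕ → ℕ) × (ℕ → ℕ) => p.2 a :=
    fun a => (continuous_apply a).comp csnd
  have cD : ∀ (u : (ℕ × ℕ → ℕ) × (ℕ → ℕ) → ℕ × ℕ), Continuous u →
      Continuous fun p : (ℕ × ℕ → ℕ) × (ℕ → ℕ) => p.1 (u p) := by
    intro u hu
    exact cont_eval.comp (cfst.prodMk hu)
  have c1 : IsClosed {p : (ℕ × ℕ → ℕ) × (ℕ → ℕ) |
      ∀ a b c : ℕ, p.1 (p.1 (a, b), c) = p.1 (a, p.1 (b, c))} := by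
    have : {p : (ℕ × ℕ → ℕ) × (ℕ → ℕ) |
        ∀ a b c : ℕ, p.1 (p.1 (a, b), c) = p.1 (a, p.1 (b, c))} =
        ⋂ (a : ℕ) (b : ℕ) (c : ℕ),
          {p : (ℕ × ℕ → ℕ) × (ℕ → ℕ) | p.1 (p.1 (a, b), c) = p.1 (a, p.1 (b, c))} := by
      ext p; simp [Set.mem_iInter]
    rw [this]
    refine isClosed_iInter fun a => isClosed_iInter fun b => isClosed_iInter fun c => ?_
    exact isClosed_eq
      (cD _ ((cD _ (continuous_const.prodMk continuous_const)).prodMk continuous_const))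
      (cD _ (continuous_const.prodMk (cD _ (continuous_const.prodMk continuous_const))))
  have c2 : IsClosed {p : (ℕ × ℕ → ℕ) × (ℕ → ℕ) | ∀ a : ℕ, p.1 (a, 0) = a} := by
    have : {p : (ℕ × ℕ → ℕ) × (ℕ → ℕ) | ∀ a : ℕ, p.1 (a, 0) = a} =
        ⋂ (a : ℕ), {p : (ℕ × ℕ → ℕ) × (ℕ → ℕ) | p.1 (a, 0) = a} := by
      ext p; simp [Set.mem_iInter]
    rw [this]
    exact isClosed_iInter fun a => isClosed_eq (cD _ continuous_const) continuous_const
  have c3 : IsClosed {p : (ℕ × ℕ → ℕ) × (ℕ → ℕ) | ∀ a : ℕ, p.1 (0, a) = a} := by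
    have : {p : (ℕ × ℕ → ℕ) × (ℕ → ℕ) | ∀ a : ℕ, p.1 (0, a) = a} =
        ⋂ (a : ℕ), {p : (ℕ × ℕ → ℕ) × (ℕ → ℕ) | p.1 (0, a) = a} := by
      ext p; simp [Set.mem_iInter]
    rw [this]
    exact isClosed_iInter fun a => isClosed_eq (cD _ continuous_const) continuous_const
  have c4 : IsClosed {p : (ℕ × ℕ → ℕ) × (ℕ → ℕ) |
      ∀ a : ℕ, p.1 (a, p.2 a) = 0 ∧ p.1 (p.2 a, a) = 0} := by
    have : {p : (ℕ × ℕ → ℕ) × (ℕ → ℕ) |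
        ∀ a : ℕ, p.1 (a, p.2 a) = 0 ∧ p.1 (p.2 a, a) = 0} =
        ⋂ (a : ℕ), ({p : (ℕ × ℕ → ℕ) × (ℕ → ℕ) | p.1 (a, p.2 a) = 0} ∩
          {p : (ℕ × ℕ → ℕ) × (ℕ → ℕ) | p.1 (p.2 a, a) = 0}) := by
      ext p; simp [Set.mem_iInter]
    rw [this]
    refine isClosed_iInter fun a => IsClosed.inter ?_ ?_
    · exact isClosed_eq (cD _ (continuous_const.prodMk (ceval2 a))) continuous_const
    · exact isClosed_eq (cD _ ((ceval2 a).prodMk continuous_const)) continuous_const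
  exact c1.inter (c2.inter (c3.inter c4))

instance : PolishSpace ↥GroupTables := isClosedEmbedding_Phi.polishSpace

lemma baireSpace_of_polish (X : Type*) [TopologicalSpace X] [PolishSpace X] :
    BaireSpace X := by
  letI := TopologicalSpace.upgradeIsCompletelyMetrizable X
  infer_instance

instance : Nonempty ↥GroupTables := by
  obtain ⟨e0⟩ : Nonempty (ℕ ≃ Multiplicative ℤ) := nonempty_equiv_of_countable
  set e : ℕ ≃ Multiplicative ℤ := e0.trans (Equiv.swap (e0 0) 1) with he
  have h0 : e 0 = 1 := by rw [he]; simp [Equiv.swap_apply_left]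
  exact ⟨⟨_, table_of_equiv e h0⟩⟩

/-! ### Countability of HNN extensions -/

lemma hnn_countable {G : Type*} [Group G] [Countable G] (A B : Subgroup G) (φ : A ≃* B) :
    Countable (HNNExtension G A B φ) := by
  haveI h0 : Countable (FreeMonoid (G ⊕ Multiplicative ℤ)) := by
    delta FreeMonoid; infer_instance
  haveI h1 : Countable (Monoid.Coprod G (Multiplicative ℤ)) := by
    delta Monoid.Coprod; exact inferInstanceAs (Countable (Quotient _))
  delta HNNExtension
  exact inferInstanceAs (Countable (Quotient _))

section Main

variable {H : Type*} [Group H] (h : ℕ → H)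

/-- The `n`-th finitely generated subgroup in the chain. -/
def Kn (n : ℕ) : Subgroup H := Subgroup.closure (h '' Set.Iic n)

lemma Kn_mono {m n : ℕ} (hmn : m ≤ n) : Kn h m ≤ Kn h n :=
  Subgroup.closure_mono (Set.image_mono (Set.Iic_subset_Iic.mpr hmn))

/-- Generators of `Kn h n`. -/
def gen (n : ℕ) (i : Fin (n + 1)) : ↥(Kn h n) :=
  ⟨h i.1, Subgroup.subset_closure ⟨i.1, Nat.lt_succ_iff.mp i.2, rfl⟩⟩

/-- The "homogeneity" comeager set: any two copies of `Kn h n` marked by the tuples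
`x`, `y` are conjugate. -/
def Cset (n : ℕ) (x y : Fin (n + 1) → ℕ) : Set ↥GroupTables :=
  {G | (∃ χ : ↥(Kn h n) →* Carrier G,
          Function.Injective χ ∧ ∀ i, χ (gen h n i) = toC G (x i)) →
       (∃ ψ : ↥(Kn h n) →* Carrier G,
          Function.Injective ψ ∧ ∀ i, ψ (gen h n i) = toC G (y i)) →
       ∃ t : Carrier G, ∀ i, t * toC G (x i) * t⁻¹ = toC G (y i)}

lemma Cset_mem_residual (n : ℕ) (x y : Fin (n + 1) → ℕ) :
    Cset h n x y ∈ residual ↥GroupTables := by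
  classical
  apply mem_residual_of_cyl
  intro G s
  by_cases hB : ∃ G' : ↥GroupTables, (∀ z ∈ s, G'.1 z = G.1 z) ∧
      (∃ χ : ↥(Kn h n) →* Carrier G',
        Function.Injective χ ∧ ∀ i, χ (gen h n i) = toC G' (x i)) ∧
      (∃ ψ : ↥(Kn h n) →* Carrier G',
        Function.Injective ψ ∧ ∀ i, ψ (gen h n i) = toC G' (y i))
  case neg =>
    refine ⟨G, fun z _ => rfl, s, fun G'' hagree hχ hψ => ?_⟩
    exact absurd ⟨G'', fun z hz => hagree z hz, hχ, hψ⟩ hB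
  case pos =>
    obtain ⟨G₁, hag, ⟨χ, hχi, hχ⟩, ⟨ψ, hψi, hψ⟩⟩ := hB
    set A : Subgroup (Carrier G₁) := χ.range with hA
    set B : Subgroup (Carrier G₁) := ψ.range with hBdef
    set θ : A ≃* B := (MonoidHom.ofInjective hχi).symm.trans (MonoidHom.ofInjective hψi)
      with hθdef
    haveI : Countable (Carrier G₁) := inferInstanceAs (Countable ℕ)
    haveI : Countable (HNNExtension (Carrier G₁) A B θ) := hnn_countable A B θ
    set j : ℕ → HNNExtension (Carrier G₁) A B θ :=
      fun k => HNNExtension.of (toC G₁ k) with hjdef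
    have hji : Function.Injective j :=
      fun a b hab => toC_injective G₁ (HNNExtension.of_injective (A := A) (B := B) (φ := θ)
        (show HNNExtension.of (toC G₁ a) = HNNExtension.of (toC G₁ b) from hab))
    have hj0 : j 0 = 1 := by
      show HNNExtension.of (toC G₁ 0) = 1
      rw [toC_zero]; exact map_one _
    set F : Finset ℕ := ((s.image Prod.fst ∪ s.image Prod.snd) ∪
        s.image (fun z => G₁.1 z)) ∪
      (Finset.image x Finset.univ ∪ Finset.image y Finset.univ) with hFdef
    obtain ⟨e, he0, heF⟩ := exists_equiv_extend hji hj0 F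
    have hmem : (fun z : ℕ × ℕ => e.symm (e z.1 * e z.2)) ∈ GroupTables :=
      table_of_equiv e he0
    set G₂ : ↥GroupTables := ⟨_, hmem⟩ with hG₂
    have hxF : ∀ i, x i ∈ F := fun i => by
      rw [hFdef]
      exact Finset.mem_union_right _
        (Finset.mem_union_left _ (Finset.mem_image_of_mem x (Finset.mem_univ i)))
    have hyF : ∀ i, y i ∈ F := fun i => by
      rw [hFdef]
      exact Finset.mem_union_right _
        (Finset.mem_union_right _ (Finset.mem_image_of_mem y (Finset.mem_univ i)))
    have hagree2 : ∀ z ∈ s, G₂.1 z = G₁.1 z := by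
      intro z hz
      have h1 : e z.1 = j z.1 := heF _ (by
        rw [hFdef]
        exact Finset.mem_union_left _ (Finset.mem_union_left _
          (Finset.mem_union_left _ (Finset.mem_image_of_mem Prod.fst hz))))
      have h2 : e z.2 = j z.2 := heF _ (by
        rw [hFdef]
        exact Finset.mem_union_left _ (Finset.mem_union_left _
          (Finset.mem_union_right _ (Finset.mem_image_of_mem Prod.snd hz))))
      have h3 : e (G₁.1 z) = j (G₁.1 z) := heF _ (by
        rw [hFdef]
        exact Finset.mem_union_left _ (Finset.mem_union_right _
          (Finset.mem_image_of_mem _ hz)))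
      show e.symm (e z.1 * e z.2) = G₁.1 z
      rw [h1, h2]
      have h4 : j z.1 * j z.2 = j (G₁.1 z) := by
        rw [hjdef]
        show HNNExtension.of (toC G₁ z.1) * HNNExtension.of (toC G₁ z.2) = _
        rw [← map_mul, toC_mul]
      rw [h4, ← h3, Equiv.symm_apply_apply]
    have haA : ∀ i, toC G₁ (x i) ∈ A := fun i => by
      rw [← hχ i]; exact ⟨gen h n i, rfl⟩
    have hbB : ∀ i, toC G₁ (y i) ∈ B := fun i => by
      rw [← hψ i]; exact ⟨gen h n i, rfl⟩
    have hθx : ∀ i, θ ⟨toC G₁ (x i), haA i⟩ = ⟨toC G₁ (y i), hbB i⟩ := by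
      intro i
      have h1 : (⟨toC G₁ (x i), haA i⟩ : A) = MonoidHom.ofInjective hχi (gen h n i) :=
        Subtype.ext (hχ i).symm
      rw [hθdef, h1]
      show (MonoidHom.ofInjective hψi)
        (((MonoidHom.ofInjective hχi).symm) ((MonoidHom.ofInjective hχi) (gen h n i)))
        = ⟨toC G₁ (y i), hbB i⟩
      rw [MulEquiv.symm_apply_apply]
      exact Subtype.ext (hψ i)
    set τ : ℕ := e.symm HNNExtension.t with hτ
    have hkey : ∀ i, G₂.1 (τ, x i) = G₂.1 (y i, τ) := by
      intro i
      show e.symm (e τ * e (x i)) = e.symm (e (y i) * e τ)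
      rw [hτ, Equiv.apply_symm_apply, heF _ (hxF i), heF _ (hyF i)]
      congr 1
      rw [hjdef]
      show HNNExtension.t * HNNExtension.of (toC G₁ (x i))
        = HNNExtension.of (toC G₁ (y i)) * HNNExtension.t
      have h5 := HNNExtension.t_mul_of (φ := θ) ⟨toC G₁ (x i), haA i⟩
      rw [hθx i] at h5
      exact h5
    set s' : Finset (ℕ × ℕ) := (Finset.image (fun i => (τ, x i)) Finset.univ) ∪
      (Finset.image (fun i => (y i, τ)) Finset.univ) with hs'
    refine ⟨G₂, fun z hz => (hagree2 z hz).trans (hag z hz), s', ?_⟩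
    intro G₃ h₃ _ _
    refine ⟨toC G₃ τ, fun i => ?_⟩
    have hm1 : (τ, x i) ∈ s' := by
      rw [hs']
      exact Finset.mem_union_left _ (Finset.mem_image_of_mem _ (Finset.mem_univ i))
    have hm2 : (y i, τ) ∈ s' := by
      rw [hs']
      exact Finset.mem_union_right _ (Finset.mem_image_of_mem _ (Finset.mem_univ i))
    have h1 : G₃.1 (τ, x i) = G₃.1 (y i, τ) := by
      rw [h₃ _ hm1, h₃ _ hm2]
      exact hkey i
    have h2 : toC G₃ τ * toC G₃ (x i) = toC G₃ (y i) * toC G₃ τ := by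
      rw [toC_mul, toC_mul, h1]
    rw [mul_inv_eq_iff_eq_mul]
    exact h2

end Main

section Chain

variable {H : Type*} [Group H] {h : ℕ → H}

lemma chain_embeds (hsurj : Function.Surjective h) (G : ↥GroupTables)
    (hE : ∀ n : ℕ, ∃ f : ↥(Kn h n) →* Carrier G, Function.Injective f)
    (hC : ∀ (n : ℕ) (x y : Fin (n + 1) → ℕ), G ∈ Cset h n x y) :
    ∃ f : H →* Carrier G, Function.Injective f := by
  classical
  -- one-step extension
  have step : ∀ (n : ℕ) (f : ↥(Kn h n) →* Carrier G), Function.Injective f →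
      ∃ g : ↥(Kn h (n + 1)) →* Carrier G, Function.Injective g ∧
        ∀ k : ↥(Kn h n), g (Subgroup.inclusion (Kn_mono h (Nat.le_succ n)) k) = f k := by
    intro n f hf
    obtain ⟨χ, hχi⟩ := hE (n + 1)
    set ι : ↥(Kn h n) →* ↥(Kn h (n + 1)) :=
      Subgroup.inclusion (Kn_mono h (Nat.le_succ n)) with hι
    have hιi : Function.Injective ι := Subgroup.inclusion_injective _
    set χ' : ↥(Kn h n) →* Carrier G := χ.comp ι with hχ'
    set xx : Fin (n + 1) → ℕ := fun i => fromC G (χ' (gen h n i)) with hxx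
    set yy : Fin (n + 1) → ℕ := fun i => fromC G (f (gen h n i)) with hyy
    obtain ⟨t, ht⟩ := hC n xx yy
      ⟨χ', hχi.comp hιi, fun i => rfl⟩ ⟨f, hf, fun i => rfl⟩
    refine ⟨(MulAut.conj t).toMonoidHom.comp χ, ?_, ?_⟩
    · intro a b hab
      exact hχi ((MulAut.conj t).injective hab)
    · suffices hsuff : ∀ (a : H) (ha : a ∈ Kn h n),
          ((MulAut.conj t).toMonoidHom.comp χ) (ι ⟨a, ha⟩) = f ⟨a, ha⟩ by
        intro k
        exact hsuff k.1 k.2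
      intro a ha
      refine Subgroup.closure_induction ?_ ?_ ?_ ?_ ha
      · rintro b ⟨m, hm, rfl⟩
        exact ht ⟨m, Nat.lt_succ_of_le (Set.mem_Iic.mp hm)⟩
      · show ((MulAut.conj t).toMonoidHom.comp χ) (ι 1) = f 1
        rw [map_one, map_one, map_one]
      · intro b c hb hc pb pc
        show ((MulAut.conj t).toMonoidHom.comp χ) (ι (⟨b, hb⟩ * ⟨c, hc⟩))
          = f (⟨b, hb⟩ * ⟨c, hc⟩)
        rw [map_mul, map_mul, map_mul]
        rw [show ((MulAut.conj t).toMonoidHom.comp χ) (ι ⟨b, hb⟩) = f ⟨b, hb⟩ from pb,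
          show ((MulAut.conj t).toMonoidHom.comp χ) (ι ⟨c, hc⟩) = f ⟨c, hc⟩ from pc]
      · intro b hb pb
        show ((MulAut.conj t).toMonoidHom.comp χ) (ι (⟨b, hb⟩)⁻¹) = f (⟨b, hb⟩)⁻¹
        rw [map_inv, map_inv, map_inv]
        rw [show ((MulAut.conj t).toMonoidHom.comp χ) (ι ⟨b, hb⟩) = f ⟨b, hb⟩ from pb]
  -- the recursively defined chain of embeddings
  obtain ⟨f₀, hf₀⟩ := hE 0
  have stepex : ∀ (n : ℕ) (prev : {f : ↥(Kn h n) →* Carrier G // Function.Injective f}),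
      ∃ g : {f : ↥(Kn h (n + 1)) →* Carrier G // Function.Injective f},
        ∀ k, g.1 (Subgroup.inclusion (Kn_mono h (Nat.le_succ n)) k) = prev.1 k := by
    intro n prev
    obtain ⟨g, hg1, hg2⟩ := step n prev.1 prev.2
    exact ⟨⟨g, hg1⟩, hg2⟩
  obtain ⟨seq, hseq⟩ : ∃ seq : ∀ n : ℕ, {f : ↥(Kn h n) →* Carrier G // Function.Injective f},
      ∀ n k, (seq (n + 1)).1 (Subgroup.inclusion (Kn_mono h (Nat.le_succ n)) k)
        = (seq n).1 k :=
    ⟨fun n => Nat.rec ⟨f₀, hf₀⟩ (fun n prev => (stepex n prev).choose) n,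
      fun n k => (stepex n _).choose_spec k⟩
  have compat : ∀ (n m : ℕ) (hle : n ≤ m) (a : H) (ha : a ∈ Kn h n),
      (seq m).1 ⟨a, Kn_mono h hle ha⟩ = (seq n).1 ⟨a, ha⟩ := by
    intro n m hle a ha
    induction m with
    | zero =>
      have : n = 0 := Nat.le_zero.mp hle
      subst this
      rfl
    | succ m ih =>
      rcases Nat.lt_or_ge n (m + 1) with hlt | hge
      · have hle' : n ≤ m := Nat.lt_succ_iff.mp hlt
        have h1 : (seq (m + 1)).1 (Subgroup.inclusion (Kn_mono h (Nat.le_succ m))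
            ⟨a, Kn_mono h hle' ha⟩) = (seq m).1 ⟨a, Kn_mono h hle' ha⟩ := hseq m _
        have h2 : (Subgroup.inclusion (Kn_mono h (Nat.le_succ m))
            (⟨a, Kn_mono h hle' ha⟩ : ↥(Kn h m))) = ⟨a, Kn_mono h hle ha⟩ := rfl
        rw [h2] at h1
        rw [h1]
        exact ih hle'
      · have : n = m + 1 := Nat.le_antisymm hle hge
        subst this
        rfl
  have memK : ∀ a : H, ∃ n, a ∈ Kn h n := by
    intro a
    obtain ⟨m, rfl⟩ := hsurj a
    exact ⟨m, Subgroup.subset_closure ⟨m, le_refl m, rfl⟩⟩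
  have key : ∀ (n : ℕ) (a : H) (ha : a ∈ Kn h n),
      (seq n).1 ⟨a, ha⟩ = (seq (memK a).choose).1 ⟨a, (memK a).choose_spec⟩ := by
    intro n a ha
    have h1 := compat n (max n (memK a).choose) (le_max_left _ _) a ha
    have h2 := compat (memK a).choose (max n (memK a).choose)
      (le_max_right _ _) a (memK a).choose_spec
    rw [← h1, ← h2]
  let F0 : H → Carrier G := fun a => (seq (memK a).choose).1 ⟨a, (memK a).choose_spec⟩
  have hmul : ∀ a b : H, F0 (a * b) = F0 a * F0 b := by
    intro a b
    have haN : a ∈ Kn h (max (memK a).choose (memK b).choose) :=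
      Kn_mono h (le_max_left _ _) (memK a).choose_spec
    have hbN : b ∈ Kn h (max (memK a).choose (memK b).choose) :=
      Kn_mono h (le_max_right _ _) (memK b).choose_spec
    have habN : a * b ∈ Kn h (max (memK a).choose (memK b).choose) := mul_mem haN hbN
    have e1 : F0 (a * b) = (seq _).1 ⟨a * b, habN⟩ := (key _ (a * b) habN).symm
    have e2 : F0 a = (seq _).1 ⟨a, haN⟩ := (key _ a haN).symm
    have e3 : F0 b = (seq _).1 ⟨b, hbN⟩ := (key _ b hbN).symm
    rw [e1, e2, e3]
    have : (⟨a * b, habN⟩ : ↥(Kn h (max (memK a).choose (memK b).choose)))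
        = ⟨a, haN⟩ * ⟨b, hbN⟩ := rfl
    rw [this, map_mul]
  have hinj : Function.Injective F0 := by
    intro a b hab
    have haN : a ∈ Kn h (max (memK a).choose (memK b).choose) :=
      Kn_mono h (le_max_left _ _) (memK a).choose_spec
    have hbN : b ∈ Kn h (max (memK a).choose (memK b).choose) :=
      Kn_mono h (le_max_right _ _) (memK b).choose_spec
    have e2 : F0 a = (seq _).1 ⟨a, haN⟩ := (key _ a haN).symm
    have e3 : F0 b = (seq _).1 ⟨b, hbN⟩ := (key _ b hbN).symm
    rw [e2, e3] at hab
    have := (seq _).2 hab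
    exact congrArg Subtype.val this
  exact ⟨MonoidHom.mk' F0 hmul, hinj⟩

end Chain

end GenEmb

open GenEmb in
/-- A group `H` is generically embeddable if and only if `H` is countable and every
finitely generated subgroup of `H` is generically embeddable. -/
theorem genericallyEmbeddable_iff_fg (H : Type*) [Group H] :
    GenericallyEmbeddable H ↔
      Countable H ∧ ∀ K : Subgroup H, K.FG → GenericallyEmbeddable K := by
  constructor
  · intro hH
    constructor
    · -- countability
      haveI : BaireSpace ↥GroupTables := baireSpace_of_polish _
      have hne : {G : ↥GroupTables | ∃ f : H →* Carrier G, Function.Injective f}.Nonempty :=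
        (dense_of_mem_residual hH).nonempty
      obtain ⟨G, f, hf⟩ := hne
      haveI : Countable (Carrier G) := inferInstanceAs (Countable ℕ)
      exact Countable.of_equiv _ (Equiv.ofInjective f hf).symm
    · intro K _
      refine Filter.mem_of_superset hH ?_
      rintro G ⟨f, hf⟩
      exact ⟨f.comp K.subtype, hf.comp (Subgroup.subtype_injective K)⟩
  · rintro ⟨hcount, hfg⟩
    haveI : Nonempty H := ⟨1⟩
    obtain ⟨h, hsurj⟩ := exists_surjective_nat H
    have hKfg : ∀ n : ℕ, (Kn h n).FG := by
      intro n
      rw [Subgroup.fg_iff]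
      exact ⟨h '' Set.Iic n, rfl, (Set.finite_Iic n).image h⟩
    have hEn : ∀ n : ℕ,
        {G : ↥GroupTables | ∃ f : ↥(Kn h n) →* Carrier G, Function.Injective f}
          ∈ residual ↥GroupTables :=
      fun n => hfg (Kn h n) (hKfg n)
    have hbig : ((⋂ n : ℕ,
          {G : ↥GroupTables | ∃ f : ↥(Kn h n) →* Carrier G, Function.Injective f}) ∩
        ⋂ (n : ℕ) (x : Fin (n + 1) → ℕ) (y : Fin (n + 1) → ℕ), Cset h n x y)
        ∈ residual ↥GroupTables := by
      refine Filter.inter_mem (countable_iInter_mem.mpr hEn) ?_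
      refine countable_iInter_mem.mpr fun n => ?_
      refine countable_iInter_mem.mpr fun x => ?_
      exact countable_iInter_mem.mpr fun y => Cset_mem_residual h n x y
    refine Filter.mem_of_superset hbig ?_
    rintro G ⟨hGE, hGC⟩
    rw [Set.mem_iInter] at hGE
    refine chain_embeds hsurj G (fun n => hGE n) ?_
    intro n x y
    have := Set.mem_iInter.mp hGC n
    have := Set.mem_iInter.mp this x
    exact Set.mem_iInter.mp this y
end

section
/- For every finitely generated group H, the set E_H = {G ∈ 𝒢 : there is an injective group homomorphism H → Ḡ} is an Fσ subset of 𝒢 (a countable union of closed sets). -/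
lemma fromC_eq_zero {G : ↥GroupTables} {x : Carrier G} : fromC G x = 0 ↔ x = 1 :=
  Iff.rfl

lemma mul_def {G : ↥GroupTables} (x y : Carrier G) :
    x * y = toC G (G.1 (fromC G x, fromC G y)) := rfl

/-- Evaluation of a word at the tuple `t` inside a group table `G`. -/
noncomputable def evalW {I : Type*} (t : I → ℕ) (w : FreeGroup I) (G : ↥GroupTables) : ℕ :=
  fromC G (FreeGroup.lift (fun i => toC G (t i)) w)

lemma isOpen_entry (p : ℕ × ℕ) (n : ℕ) : IsOpen {G : ↥GroupTables | G.1 p = n} := by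
  have h : Continuous (fun G : ↥GroupTables => G.1 p) :=
    (continuous_apply p).comp continuous_subtype_val
  exact (isOpen_discrete ({n} : Set ℕ)).preimage h

lemma cont_mul {u v : ↥GroupTables → ℕ} (hu : Continuous u) (hv : Continuous v) :
    Continuous fun G : ↥GroupTables => G.1 (u G, v G) := by
  rw [continuous_discrete_rng]
  intro n
  have heq : (fun G : ↥GroupTables => G.1 (u G, v G)) ⁻¹' {n}
      = ⋃ p : ℕ × ℕ, ((u ⁻¹' {p.1}) ∩ (v ⁻¹' {p.2}) ∩ {G | G.1 p = n}) := by
    ext G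
    simp only [Set.mem_preimage, Set.mem_singleton_iff, Set.mem_iUnion, Set.mem_inter_iff,
      Set.mem_setOf_eq]
    constructor
    · intro h
      exact ⟨(u G, v G), ⟨rfl, rfl⟩, h⟩
    · rintro ⟨⟨a, b⟩, ⟨ha, hb⟩, h⟩
      simp only at ha hb h
      rw [ha, hb]
      exact h
  rw [heq]
  exact isOpen_iUnion fun p =>
    (((isOpen_discrete _).preimage hu).inter ((isOpen_discrete _).preimage hv)).inter
      (isOpen_entry p n)

lemma inv_eq_iff {G : ↥GroupTables} (a b : ℕ) :
    fromC G (toC G a)⁻¹ = b ↔ G.1 (a, b) = 0 := by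
  constructor
  · intro h
    have := mul_inv_cancel (toC G a)
    rw [mul_def] at this
    have h0 : G.1 (fromC G (toC G a), fromC G (toC G a)⁻¹) = 0 := congrArg (fromC G) this
    rwa [h] at h0
  · intro h
    have : toC G a * toC G b = 1 := by
      rw [mul_def]
      exact congrArg (toC G) h
    have hb : toC G b = (toC G a)⁻¹ := eq_inv_of_mul_eq_one_left ?_
    · exact congrArg (fromC G) hb.symm
    · calc toC G b * toC G a = (toC G a)⁻¹ * (toC G a * toC G b) * toC G a := by group
        _ = 1 := by rw [this]; group

lemma cont_inv {u : ↥GroupTables → ℕ} (hu : Continuous u) :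
    Continuous fun G : ↥GroupTables => fromC G (toC G (u G))⁻¹ := by
  rw [continuous_discrete_rng]
  intro b
  have heq : (fun G : ↥GroupTables => fromC G (toC G (u G))⁻¹) ⁻¹' {b}
      = ⋃ a : ℕ, ((u ⁻¹' {a}) ∩ {G | G.1 (a, b) = 0}) := by
    ext G
    simp only [Set.mem_preimage, Set.mem_singleton_iff, Set.mem_iUnion, Set.mem_inter_iff,
      Set.mem_setOf_eq]
    constructor
    · intro h
      exact ⟨u G, rfl, (inv_eq_iff (u G) b).mp h⟩
    · rintro ⟨a, ha, h⟩
      rw [ha]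
      exact (inv_eq_iff a b).mpr h
  rw [heq]
  exact isOpen_iUnion fun a =>
    ((isOpen_discrete _).preimage hu).inter (isOpen_entry (a, b) 0)

lemma cont_evalW {I : Type*} (t : I → ℕ) (w : FreeGroup I) : Continuous (evalW t w) := by
  induction w using FreeGroup.induction_on with
  | C1 =>
    have h : evalW t 1 = fun _ => (0 : ℕ) := by
      funext G; simp only [evalW, map_one]; rfl
    rw [h]; exact continuous_const
  | of i =>
    have h : evalW t (FreeGroup.of i) = fun _ => t i := by
      funext G
      show fromC G (FreeGroup.lift (fun i => toC G (t i)) (FreeGroup.of i)) = t i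
      rw [FreeGroup.lift_apply_of]
      rfl
    rw [h]; exact continuous_const
  | inv_of i hi =>
    have h : evalW t (FreeGroup.of i)⁻¹ = fun G => fromC G (toC G (evalW t (FreeGroup.of i) G))⁻¹ := by
      funext G; simp only [evalW, map_inv]; rfl
    rw [h]; exact cont_inv hi
  | mul x y hx hy =>
    have h : evalW t (x * y) = fun G => G.1 (evalW t x G, evalW t y G) := by
      funext G; simp only [evalW, map_mul]; rfl
    rw [h]; exact cont_mul hx hy

/-- For every finitely generated group `H`, the embeddability set
`E_H = {G ∈ 𝒢 : H embeds into Ḡ}` is `Fσ` in `𝒢`: a countable union of closed sets. -/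
theorem embeddability_Fsigma (H : Type*) [Group H] (hfg : Group.FG H) :
    ∃ C : ℕ → Set ↥GroupTables, (∀ n, IsClosed (C n)) ∧
      {G : ↥GroupTables | ∃ f : H →* Carrier G, Function.Injective f} = ⋃ n, C n := by
  classical
  obtain ⟨S, hScl, hSfin⟩ := Group.fg_iff.mp hfg
  haveI : Finite S := hSfin.to_subtype
  -- generators
  set g : S → H := Subtype.val with hg
  -- the canonical surjection from the free group
  set π : FreeGroup S →* H := FreeGroup.lift g with hπdef
  have hπ : Function.Surjective π := by
    rw [← MonoidHom.range_eq_top, hπdef, FreeGroup.range_lift_eq_closure]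
    rw [hg, Subtype.range_coe]
    exact hScl
  -- the closed pieces, indexed by tuples of generator images
  set D : (S → ℕ) → Set ↥GroupTables :=
    fun t => {G | ∀ w : FreeGroup S, π w = 1 ↔ evalW t w G = 0} with hD
  have hDclosed : ∀ t, IsClosed (D t) := by
    intro t
    have : D t = ⋂ w : FreeGroup S, {G | π w = 1 ↔ evalW t w G = 0} := by
      ext G; simp [hD, Set.mem_iInter]
    rw [this]
    refine isClosed_iInter fun w => ?_
    by_cases hw : π w = 1
    · have : {G : ↥GroupTables | π w = 1 ↔ evalW t w G = 0}
          = evalW t w ⁻¹' {0} := by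
        ext G; simp [hw]
      rw [this]
      exact (isClosed_discrete _).preimage (cont_evalW t w)
    · have : {G : ↥GroupTables | π w = 1 ↔ evalW t w G = 0}
          = evalW t w ⁻¹' ({0}ᶜ) := by
        ext G; simp [hw]
      rw [this]
      exact (isClosed_discrete _).preimage (cont_evalW t w)
  -- the key set equality
  have hkey : {G : ↥GroupTables | ∃ f : H →* Carrier G, Function.Injective f}
      = ⋃ t : S → ℕ, D t := by
    ext G
    simp only [Set.mem_setOf_eq, Set.mem_iUnion]
    constructor
    · rintro ⟨f, hf⟩
      refine ⟨fun i => fromC G (f (g i)), fun w => ?_⟩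
      have hlift : FreeGroup.lift (fun i => toC G (fromC G (f (g i)))) = f.comp π := by
        apply FreeGroup.ext_hom
        intro i
        rw [FreeGroup.lift_apply_of]
        show f (g i) = f (π (FreeGroup.of i))
        rw [hπdef, FreeGroup.lift_apply_of]
      have : evalW (fun i => fromC G (f (g i))) w G = fromC G (f (π w)) := by
        simp only [evalW, hlift]; rfl
      rw [this, fromC_eq_zero]
      constructor
      · intro h; rw [h, map_one]
      · intro h
        apply hf
        rw [h, map_one]
    · rintro ⟨t, ht⟩
      set φ : FreeGroup S →* Carrier G := FreeGroup.lift (fun i => toC G (t i)) with hφ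
      have hker : π.ker ≤ φ.ker := by
        intro w hw
        rw [MonoidHom.mem_ker] at hw ⊢
        rw [← fromC_eq_zero]
        exact (ht w).mp hw
      set σ := Function.surjInv hπ with hσ
      have hrinv : Function.RightInverse σ π := Function.rightInverse_surjInv hπ
      set f : H →* Carrier G := π.liftOfRightInverse σ hrinv ⟨φ, hker⟩ with hfdef
      have hcomp : ∀ w, f (π w) = φ w := fun w =>
        π.liftOfRightInverse_comp_apply σ hrinv ⟨φ, hker⟩ w
      refine ⟨f, (injective_iff_map_eq_one f).mpr fun h hh => ?_⟩
      obtain ⟨w, rfl⟩ := hπ h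
      apply (ht w).mpr
      show fromC G (φ w) = 0
      rw [fromC_eq_zero, ← hcomp w]
      exact hh
  -- reindex the union by `ℕ`
  obtain ⟨e, he⟩ := exists_surjective_nat (S → ℕ)
  refine ⟨fun n => D (e n), fun n => hDclosed (e n), ?_⟩
  rw [hkey, he.iUnion_comp (fun t => D t)]
end
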